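/- arXiv:1703.11005 — 4 statements merged into one kernel-verified Lean document; each statement's English description precedes it below -/
import Mathlib

section
/- Let A be a finite set of agents and let (S,(∼_a)_{a∈A}) be a proper Kripke frame. For s ∈ S define σ(s) = { (a, [s]_a) : a ∈ A }, where [s]_a denotes the ∼_a-equivalence class of s, a subset of the disjoint union over a ∈ A of the quotients S/∼_a. Then: (1) σ is injective; and (2) for all s, t ∈ S and a ∈ A, the intersection σ(s) ∩ σ(t) contains an element with first component a if and only if s ∼_a t. -/
/- STATEMENT 9: For a proper Kripke frame, the map σ sending a state s to
{ (a, [s]_a) : a ∈ A } is injective, and σ(s) ∩ σ(t) contains an element with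
first component a iff s ∼_a t. -/

theorem sigma_injective_and_intersection
    {A S : Type*} [Fintype A]
    (r : A → S → S → Prop) (hr : ∀ a, Equivalence (r a))
    (hproper : ∀ u v : S, (∀ a, r a u v) → u = v) :
    -- (1) σ is injective
    Function.Injective
      (fun s : S => Set.range (fun a : A => ((a, {t | r a s t}) : A × Set S))) ∧
    -- (2) σ(s) ∩ σ(t) contains an element with first component a iff s ∼_a t
    (∀ (s t : S) (a : A),
      (∃ c : Set S,
        (a, c) ∈ Set.range (fun b : A => ((b, {u | r b s u}) : A × Set S)) ∧
        (a, c) ∈ Set.range (fun b : A => ((b, {u | r b t u}) : A × Set S))) ↔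
      r a s t) := by
  have key : ∀ (s t : S) (a : A), {u | r a s u} = {u | r a t u} ↔ r a s t := by
    intro s t a
    constructor
    · intro h
      have : t ∈ {u | r a t u} := (hr a).refl t
      rw [← h] at this
      exact this
    · intro h
      ext u
      constructor
      · intro hu; exact (hr a).trans ((hr a).symm h) hu
      · intro hu; exact (hr a).trans h hu
  constructor
  · intro s t h
    apply hproper
    intro a
    simp only at h
    have hmem : ((a, {u | r a s u}) : A × Set S) ∈
        Set.range (fun b : A => ((b, {u | r b t u}) : A × Set S)) := by
      rw [← h]; exact ⟨a, rfl⟩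
    obtain ⟨b, hb⟩ := hmem
    have hab : b = a := congrArg Prod.fst hb
    subst hab
    have hc : {u | r b t u} = {u | r b s u} := congrArg Prod.snd hb
    exact (key s t b).mp hc.symm
  · intro s t a
    constructor
    · rintro ⟨c, ⟨b1, hb1⟩, ⟨b2, hb2⟩⟩
      have h1 : b1 = a := congrArg Prod.fst hb1
      have h2 : b2 = a := congrArg Prod.fst hb2
      have e1 : {u | r a s u} = c := by rw [← h1]; exact congrArg Prod.snd hb1
      have e2 : {u | r a t u} = c := by rw [← h2]; exact congrArg Prod.snd hb2
      exact (key s t a).mp (e1.trans e2.symm)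
    · intro h
      exact ⟨{u | r a s u}, ⟨a, rfl⟩, ⟨a, by simp [(key s t a).mpr h]⟩⟩
end

section
/- Let A be a finite set with |A| = n+1 and let (S,(∼_a)_{a∈A}) be a proper Kripke frame. Define σ(s) = { (a, [s]_a) : a ∈ A } and let G(M) be the family of all nonempty subsets of the sets σ(s) for s ∈ S, on the vertex set of pairs (a, [s]_a). Then G(M) is a pure chromatic simplicial complex of dimension n, with coloring given by the first projection (a, [s]_a) ↦ a, and its facets are exactly the sets σ(s) for s ∈ S. -/
/- STATEMENT 10: The complex G(M) associated to a proper Kripke frame M,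
whose faces are the nonempty subsets of the sets σ(s) = {(a,[s]_a) : a ∈ A},
is a pure chromatic simplicial complex of dimension n (coloring = first
projection), whose facets are exactly the sets σ(s). -/

theorem kripke_frame_to_complex
    {A S : Type*} [Fintype A] [DecidableEq (A × Set S)] (n : ℕ)
    (hA : Fintype.card A = n + 1)
    (r : A → S → S → Prop) (hr : ∀ a, Equivalence (r a))
    (hproper : ∀ u v : S, (∀ a, r a u v) → u = v) :
    let σ : S → Finset (A × Set S) :=
      fun s => Finset.univ.image (fun a => (a, {t | r a s t}))
    let C : Set (Finset (A × Set S)) := {X | X.Nonempty ∧ ∃ s, X ⊆ σ s}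
    -- C is a simplicial complex (downward closed on nonempty subsets)
    (∀ X ∈ C, ∀ Y : Finset (A × Set S), Y ⊆ X → Y.Nonempty → Y ∈ C) ∧
    -- the coloring by the first projection is injective on every face
    (∀ X ∈ C, Set.InjOn Prod.fst (X : Set (A × Set S))) ∧
    -- the facets of C are exactly the sets σ(s)
    (∀ X : Finset (A × Set S),
      (X ∈ C ∧ ∀ Y ∈ C, X ⊆ Y → X = Y) ↔ ∃ s, X = σ s) ∧
    -- C is pure of dimension n
    (∀ X : Finset (A × Set S),
      (X ∈ C ∧ ∀ Y ∈ C, X ⊆ Y → X = Y) → X.card = n + 1) := by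
  intro σ C
  have hAne : Nonempty A := by
    rw [← Fintype.card_pos_iff, hA]; omega
  -- key: σ s ⊆ σ u implies s = u
  have hkey : ∀ s u : S, σ s ⊆ σ u → s = u := by
    intro s u hsu
    apply hproper
    intro a
    have hmem : (a, {t | r a s t}) ∈ σ u := hsu (by
      simp only [σ, Finset.mem_image]; exact ⟨a, Finset.mem_univ a, rfl⟩)
    simp only [σ, Finset.mem_image] at hmem
    obtain ⟨b, -, hb⟩ := hmem
    have hba : b = a := congrArg Prod.fst hb
    subst hba
    have hset : ({t | r b u t} : Set S) = {t | r b s t} :=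
      congrArg Prod.snd hb
    have : u ∈ ({t | r b u t} : Set S) := (hr b).refl u
    rw [hset] at this
    exact this
  have hcard : ∀ s, (σ s).card = n + 1 := by
    intro s
    rw [← hA]
    simp only [σ]
    rw [Finset.card_image_of_injective _ (fun a b hab => congrArg Prod.fst hab),
      Finset.card_univ]
  have hσC : ∀ s, σ s ∈ C := by
    intro s
    refine ⟨?_, s, le_refl _⟩
    rw [← Finset.card_pos, hcard]; omega
  have hmax : ∀ s, ∀ Y ∈ C, σ s ⊆ Y → σ s = Y := by
    rintro s Y ⟨-, u, hYu⟩ hsY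
    have := hkey s u (hsY.trans hYu)
    subst this
    exact Finset.Subset.antisymm hsY hYu
  refine ⟨?_, ?_, ?_, ?_⟩
  · rintro X ⟨-, s, hXs⟩ Y hYX hYne
    exact ⟨hYne, s, hYX.trans hXs⟩
  · rintro X ⟨-, s, hXs⟩ x hx y hy hxy
    have hx' := hXs hx
    have hy' := hXs hy
    simp only [σ, Finset.mem_image] at hx' hy'
    obtain ⟨a, -, ha⟩ := hx'
    obtain ⟨b, -, hb⟩ := hy'
    rw [← ha, ← hb]
    rw [← ha, ← hb] at hxy
    simp only at hxy
    rw [hxy]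
  · intro X
    constructor
    · rintro ⟨⟨-, s, hXs⟩, hXmax⟩
      exact ⟨s, hXmax (σ s) (hσC s) hXs⟩
    · rintro ⟨s, rfl⟩
      exact ⟨hσC s, hmax s⟩
  · intro X hX
    obtain ⟨⟨-, s, hXs⟩, hXmax⟩ := hX
    rw [hXmax (σ s) (hσC s) hXs]
    exact hcard s
end

section
/- Let C be a pure chromatic simplicial complex of dimension n colored by a set A with |A| = n+1, in which every face is contained in a facet (e.g., C finite). Then: (1) any two facets F, G containing a common vertex v satisfy F ∼_{l(v)} G; (2) the map sending a vertex v of C to the pair (l(v), E), where E is the ∼_{l(v)}-equivalence class of facets of any facet containing v, is well defined and is a bijection from the vertex set of C onto the set of pairs (a, E) with a ∈ A and E a ∼_a-equivalence class of facets of C. -/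
/- STATEMENT 11: In a pure chromatic simplicial complex of dimension n colored
by n+1 colors, in which every face is contained in a facet:
(1) any two facets sharing a vertex v are ∼_{l v}-related;
(2) the map v ↦ (l v, class of facets containing v) is well defined (the
∼_{l v}-class of any facet containing v is exactly the set of facets
containing v) and is a bijection from the vertex set of C onto the pairs
(a, E) with a a color and E a ∼_a-equivalence class of facets. -/

theorem vertices_as_color_class_pairs
    {V A : Type*} [Fintype A] (n : ℕ) (hA : Fintype.card A = n + 1)
    (C : Set (Finset V))
    (hne : ∀ X ∈ C, X.Nonempty)
    (hdc : ∀ X ∈ C, ∀ Y : Finset V, Y ⊆ X → Y.Nonempty → Y ∈ C)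
    (l : V → A)
    (hinj : ∀ X ∈ C, Set.InjOn l (X : Set V))
    (hpure : ∀ X : Finset V, (X ∈ C ∧ ∀ Y ∈ C, X ⊆ Y → X = Y) → X.card = n + 1)
    (hfacet : ∀ X ∈ C, ∃ F : Finset V, (F ∈ C ∧ ∀ Y ∈ C, F ⊆ Y → F = Y) ∧ X ⊆ F) :
    -- (1) two facets containing a common vertex v are ∼_{l v}-related
    (∀ F G : Finset V,
      (F ∈ C ∧ ∀ Y ∈ C, F ⊆ Y → F = Y) → (G ∈ C ∧ ∀ Y ∈ C, G ⊆ Y → G = Y) →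
      ∀ v, v ∈ F → v ∈ G → ∃ w, w ∈ F ∧ w ∈ G ∧ l w = l v) ∧
    -- (2) well-definedness: the ∼_{l v}-class of any facet F containing v
    -- is exactly the set of facets containing v
    (∀ (v : V) (F : Finset V),
      (F ∈ C ∧ ∀ Y ∈ C, F ⊆ Y → F = Y) → v ∈ F →
      {G : Finset V | (G ∈ C ∧ ∀ Y ∈ C, G ⊆ Y → G = Y) ∧ ∃ w, w ∈ G ∧ w ∈ F ∧ l w = l v}
        = {G : Finset V | (G ∈ C ∧ ∀ Y ∈ C, G ⊆ Y → G = Y) ∧ v ∈ G}) ∧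
    -- the map is a bijection from the vertex set of C onto the pairs
    -- (a, E) with E a ∼_a-equivalence class of facets
    Set.BijOn
      (fun v : V =>
        ((l v, {G : Finset V | (G ∈ C ∧ ∀ Y ∈ C, G ⊆ Y → G = Y) ∧ v ∈ G}) :
          A × Set (Finset V)))
      {v : V | ∃ X ∈ C, v ∈ X}
      {p : A × Set (Finset V) |
        ∃ F : Finset V, (F ∈ C ∧ ∀ Y ∈ C, F ⊆ Y → F = Y) ∧
          p.2 = {G : Finset V |
            (G ∈ C ∧ ∀ Y ∈ C, G ⊆ Y → G = Y) ∧ ∃ w, w ∈ G ∧ w ∈ F ∧ l w = p.1}} := by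
  -- every facet contains a vertex of each color
  have hsurj : ∀ F : Finset V, (F ∈ C ∧ ∀ Y ∈ C, F ⊆ Y → F = Y) →
      ∀ a : A, ∃ v ∈ F, l v = a := by
    classical
    intro F hF a
    have hcard : F.card = n + 1 := hpure F hF
    have hinjF : Set.InjOn l (F : Set V) := hinj F hF.1
    have himg : (F.image l).card = n + 1 := by
      rw [Finset.card_image_of_injOn hinjF, hcard]
    have : F.image l = Finset.univ := by
      apply Finset.eq_univ_of_card
      rw [himg, hA]
    have : a ∈ F.image l := this ▸ Finset.mem_univ a
    simpa using this
  -- class equality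
  have hclass : ∀ (v : V) (F : Finset V),
      (F ∈ C ∧ ∀ Y ∈ C, F ⊆ Y → F = Y) → v ∈ F →
      {G : Finset V | (G ∈ C ∧ ∀ Y ∈ C, G ⊆ Y → G = Y) ∧ ∃ w, w ∈ G ∧ w ∈ F ∧ l w = l v}
        = {G : Finset V | (G ∈ C ∧ ∀ Y ∈ C, G ⊆ Y → G = Y) ∧ v ∈ G} := by
    intro v F hF hv
    ext G
    simp only [Set.mem_setOf_eq]
    constructor
    · rintro ⟨hG, w, hwG, hwF, hlw⟩
      refine ⟨hG, ?_⟩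
      have : w = v := hinj F hF.1 hwF hv hlw
      rwa [← this]
    · rintro ⟨hG, hvG⟩
      exact ⟨hG, v, hvG, hv, rfl⟩
  -- every vertex lies in a facet
  have hvfacet : ∀ v : V, (∃ X ∈ C, v ∈ X) →
      ∃ F : Finset V, (F ∈ C ∧ ∀ Y ∈ C, F ⊆ Y → F = Y) ∧ v ∈ F := by
    rintro v ⟨X, hX, hvX⟩
    have hsing : ({v} : Finset V) ∈ C :=
      hdc X hX {v} (Finset.singleton_subset_iff.mpr hvX) ⟨v, Finset.mem_singleton_self v⟩
    obtain ⟨F, hF, hsub⟩ := hfacet {v} hsing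
    exact ⟨F, hF, hsub (Finset.mem_singleton_self v)⟩
  refine ⟨?_, hclass, ?_, ?_, ?_⟩
  · intro F G hF hG v hvF hvG
    exact ⟨v, hvF, hvG, rfl⟩
  · -- MapsTo
    intro v hv
    obtain ⟨F, hF, hvF⟩ := hvfacet v hv
    exact ⟨F, hF, (hclass v F hF hvF).symm⟩
  · -- InjOn
    intro v hv v' hv' heq
    obtain ⟨F, hF, hvF⟩ := hvfacet v hv
    have h1 : l v = l v' := congrArg Prod.fst heq
    have h2 : {G : Finset V | (G ∈ C ∧ ∀ Y ∈ C, G ⊆ Y → G = Y) ∧ v ∈ G}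
        = {G : Finset V | (G ∈ C ∧ ∀ Y ∈ C, G ⊆ Y → G = Y) ∧ v' ∈ G} :=
      congrArg Prod.snd heq
    have hvF' : v' ∈ F := by
      rw [Set.ext_iff] at h2
      exact ((h2 F).mp ⟨hF, hvF⟩).2
    exact hinj F hF.1 hvF hvF' h1
  · -- SurjOn
    rintro ⟨a, E⟩ ⟨F, hF, hE⟩
    obtain ⟨v, hvF, hlv⟩ := hsurj F hF a
    refine ⟨v, ⟨F, hF.1, hvF⟩, ?_⟩
    simp only [Prod.mk.injEq]
    constructor
    · exact hlv
    · simp only at hE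
      rw [hE, ← hlv]
      exact (hclass v F hF hvF).symm
end

section
/- Let C be a finite pure chromatic simplicial complex of dimension n colored by a set A with |A| = n+1, let B ⊆ A be a nonempty set of colors, and let X, Y be facets of C. Then X and Y are related by the equivalence relation on facets generated by the relation 'Z ∩ Z' contains a vertex whose color lies in B' if and only if there exist vertices x ∈ X and y ∈ Y with colors in B and a finite sequence of vertices x = w_0, w_1, …, w_k = y of C, all with colors in B, such that for each j either w_j = w_{j+1} or {w_j, w_{j+1}} is a face of C. (This identifies the accessibility classes underlying common knowledge of the group B with the connected components of the subcomplex of C spanned by the vertices with colors in B.) -/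
section Aux

variable {V : Type*} [DecidableEq V]

/-- A path of vertices: all satisfy `P` and lie in some face, consecutive ones
equal or spanning an edge. -/
def PathOK (C : Set (Finset V)) (P : V → Prop) (k : ℕ) (w : ℕ → V) : Prop :=
  (∀ j ≤ k, P (w j) ∧ ∃ Z ∈ C, w j ∈ Z) ∧
  (∀ j < k, w j = w (j + 1) ∨ ({w j, w (j + 1)} : Finset V) ∈ C)

lemma PathOK.rev {C : Set (Finset V)} {P : V → Prop} {k : ℕ} {w : ℕ → V}
    (h : PathOK C P k w) : PathOK C P k (fun j => w (k - j)) := by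
  obtain ⟨h1, h2⟩ := h
  constructor
  · intro j _; exact h1 _ (by omega)
  · intro j hj
    have e1 : k - j = (k - (j + 1)) + 1 := by omega
    rcases h2 (k - (j + 1)) (by omega) with h | h
    · left; simp only; rw [e1, ← h]
    · right; simp only; rw [e1, Finset.pair_comm]; exact h

lemma PathOK.append {C : Set (Finset V)} {P : V → Prop} {k1 k2 : ℕ} {w1 w2 : ℕ → V}
    (h1 : PathOK C P k1 w1) (h2 : PathOK C P k2 w2)
    (hc : w1 k1 = w2 0 ∨ ({w1 k1, w2 0} : Finset V) ∈ C) :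
    PathOK C P (k1 + 1 + k2)
      (fun j => if j ≤ k1 then w1 j else w2 (j - (k1 + 1))) := by
  constructor
  · intro j hj
    by_cases hjk : j ≤ k1
    · simpa [hjk] using h1.1 j hjk
    · simp only [if_neg hjk]
      exact h2.1 _ (by omega)
  · intro j hj
    rcases lt_trichotomy j k1 with hlt | heq | hgt
    · simp only [if_pos (by omega : j ≤ k1), if_pos (by omega : j + 1 ≤ k1)]
      exact h1.2 j hlt
    · subst heq
      simp only [if_pos le_rfl, if_neg (by omega : ¬ j + 1 ≤ j)]
      have : j + 1 - (j + 1) = 0 := by omega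
      rw [this]; exact hc
    · simp only [if_neg (by omega : ¬ j ≤ k1), if_neg (by omega : ¬ j + 1 ≤ k1)]
      have e1 : j + 1 - (k1 + 1) = (j - (k1 + 1)) + 1 := by omega
      rw [e1]
      exact h2.2 (j - (k1 + 1)) (by omega)

lemma exists_facet_of_face {C : Set (Finset V)} (hfin : C.Finite) {e : Finset V}
    (he : e ∈ C) :
    ∃ F : Finset V, (F ∈ C ∧ ∀ Z ∈ C, F ⊆ Z → F = Z) ∧ e ⊆ F := by
  have hS : {Z | Z ∈ C ∧ e ⊆ Z}.Finite := hfin.subset (fun Z hZ => hZ.1)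
  obtain ⟨F, hF, hmax⟩ :=
    hS.exists_maximalFor Finset.card _ ⟨e, he, subset_rfl⟩
  refine ⟨F, ⟨hF.1, fun Z hZ hsub => ?_⟩, hF.2⟩
  have hZS : Z ∈ {Z | Z ∈ C ∧ e ⊆ Z} := ⟨hZ, hF.2.trans hsub⟩
  exact Finset.eq_of_subset_of_card_le hsub
    (hmax hZS (Finset.card_le_card hsub))

end Aux

/- STATEMENT 15: In a finite pure chromatic simplicial complex of dimension n
colored by n+1 colors, two facets are related by the equivalence relation
generated by "the intersection contains a vertex with color in B" iff they are
joined, through vertices of colors in B, by a path of vertices in which each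
consecutive pair is equal or spans a face (an edge) of the complex: the
accessibility classes underlying common knowledge of the group B are the
connected components of the subcomplex spanned by the B-colored vertices. -/

theorem common_knowledge_classes_are_connected_components
    {V A : Type*} [DecidableEq V] [Fintype A] (n : ℕ)
    (hA : Fintype.card A = n + 1)
    (C : Set (Finset V)) (hfin : C.Finite)
    (hne : ∀ X ∈ C, X.Nonempty)
    (hdc : ∀ X ∈ C, ∀ Y : Finset V, Y ⊆ X → Y.Nonempty → Y ∈ C)
    (l : V → A)
    (hinj : ∀ X ∈ C, Set.InjOn l (X : Set V))
    (hpure : ∀ X : Finset V, (X ∈ C ∧ ∀ Y ∈ C, X ⊆ Y → X = Y) → X.card = n + 1)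
    (B : Set A) (hB : B.Nonempty)
    (X Y : {X : Finset V // X ∈ C ∧ ∀ Z ∈ C, X ⊆ Z → X = Z}) :
    Relation.EqvGen
      (fun (Z Z' : {X : Finset V // X ∈ C ∧ ∀ Z ∈ C, X ⊆ Z → X = Z}) =>
        ∃ v, v ∈ Z.1 ∧ v ∈ Z'.1 ∧ l v ∈ B)
      X Y ↔
    ∃ x ∈ X.1, ∃ y ∈ Y.1, l x ∈ B ∧ l y ∈ B ∧
      ∃ (k : ℕ) (w : ℕ → V),
        w 0 = x ∧ w k = y ∧
        (∀ j ≤ k, l (w j) ∈ B ∧ ∃ Z ∈ C, w j ∈ Z) ∧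
        (∀ j < k, w j = w (j + 1) ∨ ({w j, w (j + 1)} : Finset V) ∈ C) := by
  classical
  -- every facet contains a vertex of every color
  have hcolor : ∀ Z : {X : Finset V // X ∈ C ∧ ∀ Z ∈ C, X ⊆ Z → X = Z},
      ∀ b : A, ∃ v ∈ Z.1, l v = b := by
    intro Z b
    have hcard : Z.1.card = n + 1 := hpure Z.1 Z.2
    have himg : (Z.1.image l).card = n + 1 := by
      rw [Finset.card_image_of_injOn (hinj Z.1 Z.2.1), hcard]
    have huniv : Z.1.image l = Finset.univ :=
      Finset.eq_univ_of_card _ (by rw [himg, hA])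
    have : b ∈ Z.1.image l := by rw [huniv]; exact Finset.mem_univ b
    simpa using this
  constructor
  · intro h
    induction h with
    | rel Z Z' hr =>
        obtain ⟨v, hv1, hv2, hvB⟩ := hr
        exact ⟨v, hv1, v, hv2, hvB, hvB, 0, fun _ => v, rfl, rfl,
          fun j _ => ⟨hvB, Z.1, Z.2.1, hv1⟩, fun j hj => absurd hj (by omega)⟩
    | refl Z =>
        obtain ⟨b, hb⟩ := hB
        obtain ⟨v, hv, hvb⟩ := hcolor Z b
        have hvB : l v ∈ B := by rw [hvb]; exact hb
        exact ⟨v, hv, v, hv, hvB, hvB, 0, fun _ => v, rfl, rfl,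
          fun j _ => ⟨hvB, Z.1, Z.2.1, hv⟩, fun j hj => absurd hj (by omega)⟩
    | symm Z Z' _ ih =>
        obtain ⟨x, hx, y, hy, hxB, hyB, k, w, hw0, hwk, hmem, hstep⟩ := ih
        have hrev := PathOK.rev (C := C) (P := fun v => l v ∈ B) ⟨hmem, hstep⟩
        exact ⟨y, hy, x, hx, hyB, hxB, k, fun j => w (k - j),
          by simpa using hwk, by simpa using hw0, hrev.1, hrev.2⟩
    | trans Z Z' Z'' _ _ ih1 ih2 =>
        obtain ⟨x, hx, y, hy, hxB, hyB, k1, w1, h10, h1k, hm1, hs1⟩ := ih1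
        obtain ⟨y', hy', z, hz, hy'B, hzB, k2, w2, h20, h2k, hm2, hs2⟩ := ih2
        have hc : w1 k1 = w2 0 ∨ ({w1 k1, w2 0} : Finset V) ∈ C := by
          rw [h1k, h20]
          by_cases hyy : y = y'
          · exact Or.inl hyy
          · refine Or.inr (hdc Z'.1 Z'.2.1 _ ?_ ⟨y, by simp⟩)
            intro a ha
            simp only [Finset.mem_insert, Finset.mem_singleton] at ha
            rcases ha with rfl | rfl <;> assumption
        have hap := PathOK.append (C := C) (P := fun v => l v ∈ B)
          ⟨hm1, hs1⟩ ⟨hm2, hs2⟩ hc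
        refine ⟨x, hx, z, hz, hxB, hzB, k1 + 1 + k2, _, ?_, ?_, hap.1, hap.2⟩
        · simp [h10]
        · simp only [if_neg (by omega : ¬ k1 + 1 + k2 ≤ k1)]
          rw [show k1 + 1 + k2 - (k1 + 1) = k2 by omega]
          exact h2k
  · rintro ⟨x, hx, y, hy, hxB, hyB, k, w, hw0, hwk, hmem, hstep⟩
    have key : ∀ j, j ≤ k → ∀ F : {X : Finset V // X ∈ C ∧ ∀ Z ∈ C, X ⊆ Z → X = Z},
        w j ∈ F.1 →
        Relation.EqvGen
          (fun (Z Z' : {X : Finset V // X ∈ C ∧ ∀ Z ∈ C, X ⊆ Z → X = Z}) =>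
            ∃ v, v ∈ Z.1 ∧ v ∈ Z'.1 ∧ l v ∈ B) X F := by
      intro j
      induction j with
      | zero =>
          intro _ F hF
          exact Relation.EqvGen.rel _ _
            ⟨w 0, by rw [hw0]; exact hx, hF, by rw [hw0]; exact hxB⟩
      | succ j ih =>
          intro hj F hF
          rcases hstep j (by omega) with heq | hedge
          · exact ih (by omega) F (by rw [heq]; exact hF)
          · obtain ⟨G, hG, hsub⟩ := exists_facet_of_face hfin hedge
            have h1 := ih (by omega) ⟨G, hG⟩ (hsub (by simp))
            refine Relation.EqvGen.trans _ _ _ h1 (Relation.EqvGen.rel _ _ ?_)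
            exact ⟨w (j + 1), hsub (by simp), hF, (hmem (j + 1) hj).1⟩
    exact key k le_rfl Y (by rw [hwk]; exact hy)
end
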